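/- Let F satisfy the dilaton equation ∂F/∂t_1 = (∑_{n≥0} t_n ∂/∂t_n + 2ħ ∂/∂ħ − 2) F + ħ/24, and let F̃ = F + ∑_{g≥1} b_g ħ^g ε^g ∂^{2g}F/∂t_0^{2g} for constants b_g. Then F̃ satisfies the same dilaton equation: ∂F̃/∂t_1 = (∑_{n≥0} t_n ∂/∂t_n + 2ħ ∂/∂ħ − 2) F̃ + ħ/24. -/

import Mathlib

/-- Power series in `ε`. -/
abbrev B := PowerSeries ℚ

/-- The coefficient ring `ℚ[[ħ, ε]]`, viewed as power series in `ħ` with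
coefficients power series in `ε`. -/
abbrev A := PowerSeries B

/-- The partial derivative `∂/∂t_n` on formal power series in `t_0, t_1, t_2, …`. -/
noncomputable def pd (n : ℕ) (F : MvPowerSeries ℕ A) : MvPowerSeries ℕ A :=
  fun m => ((m n + 1 : ℕ) : A) * F (m + Finsupp.single n 1)

/-- The Euler operator `F ↦ ∑_{n≥0} t_n ∂F/∂t_n` (it multiplies the coefficient of a
monomial by its total degree). -/
noncomputable def eulerSum (F : MvPowerSeries ℕ A) : MvPowerSeries ℕ A :=
  fun m => ((m.sum fun _ e => e : ℕ) : A) * F m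

/-- The operator `2ħ ∂/∂ħ`, acting on the coefficients. -/
noncomputable def twoHbarDHbar (F : MvPowerSeries ℕ A) : MvPowerSeries ℕ A :=
  fun m => 2 * PowerSeries.X * PowerSeries.derivativeFun (F m)

/-- The constant term `ħ/24` of the dilaton equation. -/
noncomputable def hbarOver24 : A := ((1 : ℚ) / 24) • PowerSeries.X

/-- The correction `∑_{g≥1} b_g ħ^g ε^g ∂^{2g}F/∂t_0^{2g}`; the factor `ħ^g` makes
the sum `ħ`-adically convergent, so it can be defined coefficientwise. -/
noncomputable def corr (b : ℕ → ℚ) (F : MvPowerSeries ℕ A) : MvPowerSeries ℕ A :=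
  fun m => PowerSeries.mk fun N => ∑ g ∈ Finset.Icc 1 N,
    b g • (PowerSeries.X ^ g * PowerSeries.coeff (R := B) (N - g) (((pd 0)^[2 * g] F) m))

open PowerSeries Finsupp

lemma my_coeff_natCast_mul (k N : ℕ) (f : A) :
    PowerSeries.coeff (R := B) N ((k : A) * f) = (k : B) * PowerSeries.coeff (R := B) N f := by
  rw [← map_natCast (PowerSeries.C (R := B)) k, PowerSeries.coeff_C_mul]

lemma my_deriv_natCast_mul (k : ℕ) (f : A) :
    PowerSeries.derivativeFun ((k : A) * f) = (k : A) * PowerSeries.derivativeFun f := by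
  rw [← map_natCast (PowerSeries.C (R := B)) k, ← PowerSeries.smul_eq_C_mul,
    PowerSeries.derivativeFun_smul, PowerSeries.smul_eq_C_mul]

lemma my_coeff_twoX_deriv (f : A) (N : ℕ) :
    PowerSeries.coeff (R := B) N (2 * PowerSeries.X * PowerSeries.derivativeFun f)
      = ((2 * N : ℕ) : B) * PowerSeries.coeff (R := B) N f := by
  have h2 : (2 : A) * PowerSeries.X * f.derivativeFun
      = PowerSeries.X * (f.derivativeFun + f.derivativeFun) := by ring
  rw [h2]
  cases N with
  | zero => simp
  | succ n =>
    rw [PowerSeries.coeff_succ_X_mul, map_add,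
      show f.derivativeFun = PowerSeries.derivative B f from rfl, PowerSeries.coeff_derivative]
    push_cast
    ring

lemma my_sum_add_single (m : ℕ →₀ ℕ) (n : ℕ) :
    ((m + Finsupp.single n 1).sum fun _ e => e) = (m.sum fun _ e => e) + 1 := by
  rw [Finsupp.sum_add_index' (fun _ => rfl) (fun _ _ _ => rfl), Finsupp.sum_single_index rfl]

lemma my_step (G E : MvPowerSeries ℕ A) (c : ℕ)
    (hG : ∀ m, pd 1 G m = eulerSum G m + (c : A) * G m + twoHbarDHbar G m - 2 * G m + E m)
    (hE : ∀ m : ℕ →₀ ℕ, E (m + Finsupp.single 0 1) = 0) :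
    ∀ m, pd 1 (pd 0 G) m = eulerSum (pd 0 G) m + ((c + 1 : ℕ) : A) * pd 0 G m
      + twoHbarDHbar (pd 0 G) m - 2 * pd 0 G m := by
  intro m
  have e1 : ((m + Finsupp.single 0 1 : ℕ →₀ ℕ)) 1 = m 1 := by simp
  have e0 : ((m + Finsupp.single 1 1 : ℕ →₀ ℕ)) 0 = m 0 := by simp
  have ec : m + Finsupp.single 1 1 + Finsupp.single 0 1
      = m + Finsupp.single 0 1 + Finsupp.single 1 1 := by
    rw [add_assoc, add_assoc, add_comm (Finsupp.single 1 1)]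
  have K := hG (m + Finsupp.single 0 1)
  simp only [pd, eulerSum, twoHbarDHbar, e1, my_sum_add_single, hE, add_zero] at K
  simp only [pd, eulerSum, twoHbarDHbar, e0, ec, my_deriv_natCast_mul]
  push_cast at K ⊢
  linear_combination (((m 0 : ℕ) : A) + 1) * K

lemma my_key (b : ℕ → ℚ) (F : MvPowerSeries ℕ A)
    (h : pd 1 F = eulerSum F + twoHbarDHbar F - (2 : A) • F +
      MvPowerSeries.C (σ := ℕ) (R := A) hbarOver24) :
    ∀ k, 1 ≤ k → ∀ m, pd 1 ((pd 0)^[k] F) m = eulerSum ((pd 0)^[k] F) m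
      + ((k : ℕ) : A) * ((pd 0)^[k] F) m + twoHbarDHbar ((pd 0)^[k] F) m
      - 2 * ((pd 0)^[k] F) m := by
  have hC : ∀ m : ℕ →₀ ℕ, (MvPowerSeries.C (σ := ℕ) (R := A) hbarOver24) (m + Finsupp.single 0 1) = 0 := by
    intro m
    have hm : m + Finsupp.single 0 1 ≠ 0 := by
      intro h0
      have := DFunLike.congr_fun h0 0
      simp at this
    rw [show (MvPowerSeries.C (σ := ℕ) (R := A) hbarOver24) (m + Finsupp.single 0 1)
        = MvPowerSeries.coeff (R := A) (m + Finsupp.single 0 1) (MvPowerSeries.C (σ := ℕ) (R := A) hbarOver24)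
        from rfl, MvPowerSeries.coeff_C, if_neg hm]
  have h0 : ∀ m, pd 1 F m = eulerSum F m + ((0 : ℕ) : A) * F m + twoHbarDHbar F m - 2 * F m
      + (MvPowerSeries.C (σ := ℕ) (R := A) hbarOver24) m := by
    intro m
    have := congrArg (fun Φ : MvPowerSeries ℕ A => Φ m) h
    rw [this]
    push_cast
    show (eulerSum F + twoHbarDHbar F - (2 : A) • F + MvPowerSeries.C (σ := ℕ) (R := A) hbarOver24) m = _
    show eulerSum F m + twoHbarDHbar F m - 2 * F m + (MvPowerSeries.C (σ := ℕ) (R := A) hbarOver24) m = _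
    ring
  intro k hk
  induction k with
  | zero => omega
  | succ n ih =>
    rcases Nat.eq_or_lt_of_le hk with h1 | h1
    · -- n + 1 = 1
      have hn : n = 0 := by omega
      subst hn
      simpa using my_step F (MvPowerSeries.C (σ := ℕ) (R := A) hbarOver24) 0 h0 hC
    · have hn : 1 ≤ n := by omega
      have ih' := ih hn
      have hstep := my_step ((pd 0)^[n] F) 0 n (fun m => by
        rw [show (0 : MvPowerSeries ℕ A) m = 0 from rfl, add_zero]
        exact ih' m) (fun m => rfl)
      intro m
      rw [Function.iterate_succ_apply']
      exact hstep m

lemma my_corr_eq (b : ℕ → ℚ) (F : MvPowerSeries ℕ A)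
    (h : pd 1 F = eulerSum F + twoHbarDHbar F - (2 : A) • F +
      MvPowerSeries.C (σ := ℕ) (R := A) hbarOver24) :
    ∀ m, pd 1 (corr b F) m = eulerSum (corr b F) m + twoHbarDHbar (corr b F) m
      - 2 * corr b F m := by
  have key := my_key b F h
  have two_cast : (2 : A) = ((2 : ℕ) : A) := by norm_num
  intro m
  apply PowerSeries.ext
  intro N
  simp only [pd, eulerSum, twoHbarDHbar, corr]
  rw [map_sub, map_add, my_coeff_natCast_mul, my_coeff_natCast_mul, my_coeff_twoX_deriv,
    two_cast, my_coeff_natCast_mul]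
  simp only [PowerSeries.coeff_mk]
  rw [Finset.mul_sum, Finset.mul_sum, Finset.mul_sum, Finset.mul_sum,
    ← Finset.sum_add_distrib, ← Finset.sum_sub_distrib]
  apply Finset.sum_congr rfl
  intro g hg
  obtain ⟨hg1, hgN⟩ := Finset.mem_Icc.mp hg
  have K := congrArg (PowerSeries.coeff (R := B) (N - g)) (key (2 * g) (by omega) m)
  simp only [pd, eulerSum, twoHbarDHbar] at K
  rw [map_sub, map_add, map_add, my_coeff_natCast_mul, my_coeff_natCast_mul,
    my_coeff_natCast_mul, my_coeff_twoX_deriv, two_cast, my_coeff_natCast_mul] at K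
  simp only [PowerSeries.smul_eq_C_mul]
  push_cast [Nat.cast_sub hgN] at K ⊢
  linear_combination (PowerSeries.C (R := ℚ) (b g) * PowerSeries.X ^ g) * K

/-- if `F` satisfies the dilaton equation
`∂F/∂t_1 = (∑_{n≥0} t_n ∂/∂t_n + 2ħ∂/∂ħ − 2)F + ħ/24`, then
`F̃ = F + ∑_{g≥1} b_g ħ^g ε^g ∂^{2g}F/∂t_0^{2g}` satisfies the same dilaton
equation. -/
theorem dilaton_equation_for_tilde_F (b : ℕ → ℚ) (F : MvPowerSeries ℕ A)
    (h : pd 1 F = eulerSum F + twoHbarDHbar F - (2 : A) • F +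
      MvPowerSeries.C (σ := ℕ) (R := A) hbarOver24) :
    pd 1 (F + corr b F) =
      eulerSum (F + corr b F) + twoHbarDHbar (F + corr b F) - (2 : A) • (F + corr b F) +
        MvPowerSeries.C (σ := ℕ) (R := A) hbarOver24 := by
  have h2 := my_corr_eq b F h
  funext m
  have h1 := congrArg (fun Φ : MvPowerSeries ℕ A => Φ m) h
  rw [show (eulerSum F + twoHbarDHbar F - (2 : A) • F + MvPowerSeries.C (σ := ℕ) (R := A) hbarOver24) m
      = eulerSum F m + twoHbarDHbar F m - 2 * F m + (MvPowerSeries.C (σ := ℕ) (R := A) hbarOver24) m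
      from rfl] at h1
  show pd 1 (F + corr b F) m = eulerSum (F + corr b F) m + twoHbarDHbar (F + corr b F) m
    - 2 * (F + corr b F) m + (MvPowerSeries.C (σ := ℕ) (R := A) hbarOver24) m
  have h2m := h2 m
  simp only [pd, eulerSum, twoHbarDHbar] at h1 h2m ⊢
  simp only [show ∀ (G H : MvPowerSeries ℕ A) (x : ℕ →₀ ℕ), (G + H) x = G x + H x
    from fun _ _ _ => rfl, PowerSeries.derivativeFun_add]
  linear_combination h1 + h2m
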